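/- Let F be a field of characteristic ≠ 2, n ≥ 2, and 1 < l < m < n. Let B_{n,l} denote the n×n matrix with entries 1 in positions (n,1),…,(n,l) and 0 elsewhere, and similarly B_{n,m}. Then there is no degree-preserving F-algebra isomorphism A(B_{n,l}) → A(B_{n,m}). -/

import Mathlib

open scoped BigOperators

noncomputable section

variable {F : Type} [Field F]

/-- `T` is strictly lower triangular. -/
def SLT {n : ℕ} (T : Matrix (Fin n) (Fin n) F) : Prop :=
  ∀ i j : Fin n, i ≤ j → T i j = 0

/-- The ideal of relations defining the nil graded algebra `A(T)`:
`X i ^ 2 = ∑ j < i, T i j * X j * X i` (for `i = 0` the sum is empty, giving `X 0 ^ 2 = 0`). -/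
def ntIdeal {n : ℕ} (T : Matrix (Fin n) (Fin n) F) : Ideal (MvPolynomial (Fin n) F) :=
  Ideal.span {p | ∃ i : Fin n,
    p = MvPolynomial.X i ^ 2 -
      ∑ j ∈ Finset.univ.filter (fun j => j < i),
        MvPolynomial.C (T i j) * MvPolynomial.X j * MvPolynomial.X i}

/-- The nil graded algebra `A(T)` associated to the strictly lower triangular matrix `T`. -/
abbrev NTAlg {n : ℕ} (T : Matrix (Fin n) (Fin n) F) : Type :=
  MvPolynomial (Fin n) F ⧸ ntIdeal T

/-- The generator `X i` of `A(T)`. -/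
def ntGen {n : ℕ} (T : Matrix (Fin n) (Fin n) F) (i : Fin n) : NTAlg T :=
  Ideal.Quotient.mk (ntIdeal T) (MvPolynomial.X i)

/-- There is a degree-preserving isomorphism `A(T) → A(S)`, i.e. an algebra isomorphism
sending each generator to an `F`-linear combination of the generators of the target. -/
def NTIso {n : ℕ} (T S : Matrix (Fin n) (Fin n) F) : Prop :=
  ∃ e : NTAlg T ≃ₐ[F] NTAlg S, ∃ Γ : Matrix (Fin n) (Fin n) F,
    ∀ j : Fin n, e (ntGen T j) = ∑ i : Fin n, Γ i j • ntGen S i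

/-- The matrix `B_{n,l}`: entries `1` in positions `(n, 1), …, (n, l)` (1-based), `0` elsewhere. -/
def Bnl (n l : ℕ) : Matrix (Fin n) (Fin n) F :=
  fun i j => if i.val = n - 1 ∧ j.val < l then (1 : F) else 0


section helpers
open MvPolynomial

variable {n : ℕ}

def Lv (c : Fin n → F) : MvPolynomial (Fin n) F := ∑ i, C (c i) * X i

def ntg (T : Matrix (Fin n) (Fin n) F) (i : Fin n) : MvPolynomial (Fin n) F :=
  X i ^ 2 - ∑ j ∈ Finset.univ.filter (fun j => j < i), C (T i j) * X j * X i

lemma ntIdeal_eq (T : Matrix (Fin n) (Fin n) F) :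
    ntIdeal T = Ideal.span {p | ∃ i : Fin n, p = ntg T i} := rfl

lemma deg_single (a : Fin n) (k : ℕ) : (Finsupp.single a k).degree = k := by
  rcases eq_or_ne k 0 with rfl | hk
  · simp
  · rw [Finsupp.degree_single]

lemma deg_add (μ ν : Fin n →₀ ℕ) : (μ + ν).degree = μ.degree + ν.degree := by
  simp [Finsupp.degree_eq_weight_one, map_add]

lemma ntg_hom (T : Matrix (Fin n) (Fin n) F) (i : Fin n) :
    (ntg T i).IsHomogeneous 2 := by
  refine (isHomogeneous_X_pow _ _).sub (IsHomogeneous.sum _ _ _ fun j _ => ?_)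
  have h1 : (C (T i j) * X j * X i : MvPolynomial (Fin n) F).IsHomogeneous (1 + 1) :=
    (isHomogeneous_C_mul_X _ _).mul (isHomogeneous_X _ _)
  simpa using h1

lemma coeff_mul_eq (q g : MvPolynomial (Fin n) F) (hg : g.IsHomogeneous 2)
    (μ : Fin n →₀ ℕ) (hμ : μ.degree ≤ 2) :
    coeff μ (q * g) = coeff 0 q * coeff μ g := by
  classical
  rw [coeff_mul, Finset.sum_eq_single ((0 : Fin n →₀ ℕ), μ)]
  · intro ab hab hne
    rw [Finset.HasAntidiagonal.mem_antidiagonal] at hab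
    by_cases ha : ab.1 = 0
    · exfalso; apply hne
      have : ab.2 = μ := by rw [← hab, ha, zero_add]
      exact Prod.ext ha this
    · have hd : ab.1.degree + ab.2.degree = μ.degree := by rw [← hab, deg_add]
      have ha' : ab.1.degree ≠ 0 := fun h => ha ((Finsupp.degree_eq_zero_iff _).mp h)
      rw [hg.coeff_eq_zero (by omega), mul_zero]
  · intro h
    exact absurd (by rw [Finset.HasAntidiagonal.mem_antidiagonal, zero_add]) h

lemma key_vanish (T : Matrix (Fin n) (Fin n) F) (μ ν : Fin n →₀ ℕ)
    (hμ : μ.degree ≤ 2) (hν : ν.degree ≤ 2) (α β : F)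
    (hg : ∀ i : Fin n, α * coeff μ (ntg T i) + β * coeff ν (ntg T i) = 0)
    {p : MvPolynomial (Fin n) F} (hp : p ∈ ntIdeal T) :
    α * coeff μ p + β * coeff ν p = 0 := by
  rw [ntIdeal_eq, Ideal.span] at hp
  obtain ⟨c, hsupp, hsum⟩ := Submodule.mem_span_set.mp hp
  rw [← hsum, Finsupp.sum, coeff_sum, coeff_sum, Finset.mul_sum, Finset.mul_sum,
    ← Finset.sum_add_distrib]
  apply Finset.sum_eq_zero
  intro a ha
  obtain ⟨i, hi⟩ := hsupp ha
  have hi' : a = ntg T i := hi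
  subst hi'
  rw [smul_eq_mul, coeff_mul_eq _ _ (ntg_hom T i) μ hμ, coeff_mul_eq _ _ (ntg_hom T i) ν hν,
    mul_left_comm, mul_left_comm β, ← mul_add, hg i, mul_zero]

lemma key_vanish1 (T : Matrix (Fin n) (Fin n) F) (j : Fin n)
    {p : MvPolynomial (Fin n) F} (hp : p ∈ ntIdeal T) :
    coeff (Finsupp.single j 1) p = 0 := by
  have h := key_vanish T (Finsupp.single j 1) 0 (by rw [deg_single]; omega) (by simp) 1 0
    (fun i => by
      rw [(ntg_hom T i).coeff_eq_zero (by rw [deg_single]; omega)]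
      ring) hp
  simpa using h

end helpers

section mono
variable {n : ℕ}

lemma single_cancel {i k b : Fin n} (h : Finsupp.single i 1 + Finsupp.single k 1
    = Finsupp.single i 1 + Finsupp.single b 1) : k = b := by
  have h' : Finsupp.single k (1:ℕ) = Finsupp.single b 1 := by
    ext x
    have := DFunLike.congr_fun h x
    simp only [Finsupp.add_apply] at this
    omega
  exact (Finsupp.single_left_inj one_ne_zero).mp h'

lemma mono_cross_iff {a b i k : Fin n} (hab : a ≠ b) :
    Finsupp.single i 1 + Finsupp.single k 1 = Finsupp.single a 1 + Finsupp.single b 1 ↔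
      (i = a ∧ k = b) ∨ (i = b ∧ k = a) := by
  constructor
  · intro h
    rcases eq_or_ne i a with rfl | hia
    · exact Or.inl ⟨rfl, single_cancel h⟩
    · have hi := DFunLike.congr_fun h i
      simp only [Finsupp.add_apply, Finsupp.single_apply, if_pos rfl] at hi
      have hbi : b = i := by
        by_contra hbi
        rw [if_neg (fun hh : a = i => hia hh.symm), if_neg hbi] at hi
        split_ifs at hi <;> omega
      subst hbi
      refine Or.inr ⟨rfl, ?_⟩
      apply single_cancel (i := b)
      rw [h, add_comm]
  · rintro (⟨rfl, rfl⟩ | ⟨rfl, rfl⟩)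
    · rfl
    · rw [add_comm]

lemma mono_sq_iff {a i k : Fin n} :
    Finsupp.single i 1 + Finsupp.single k 1 = Finsupp.single a 2 ↔ i = a ∧ k = a := by
  constructor
  · intro h
    have hia : i = a := by
      have hi := DFunLike.congr_fun h i
      simp only [Finsupp.add_apply, Finsupp.single_apply, if_pos rfl] at hi
      by_contra hia
      rw [if_neg (fun hh : a = i => hia hh.symm)] at hi
      split_ifs at hi <;> omega
    subst hia
    refine ⟨rfl, ?_⟩
    apply single_cancel (i := i) (b := i)
    rw [h]
    ext x
    simp only [Finsupp.add_apply, Finsupp.single_apply]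
    split_ifs <;> omega
  · rintro ⟨rfl, rfl⟩
    ext x
    simp only [Finsupp.add_apply, Finsupp.single_apply]
    split_ifs <;> omega

lemma sum_cross {F : Type} [Field F] (f : Fin n → Fin n → F) {a b : Fin n} (hab : a ≠ b) :
    (∑ i : Fin n, ∑ k : Fin n,
      if Finsupp.single i 1 + Finsupp.single k 1 = Finsupp.single a 1 + Finsupp.single b 1
      then f i k else 0) = f a b + f b a := by
  have key : ∀ i k : Fin n,
      (if Finsupp.single i 1 + Finsupp.single k 1 = Finsupp.single a 1 + Finsupp.single b 1
        then f i k else 0)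
      = (if k = b then if i = a then f i k else 0 else 0)
        + (if k = a then if i = b then f i k else 0 else 0) := by
    intro i k
    by_cases h : Finsupp.single i 1 + Finsupp.single k 1
        = Finsupp.single a 1 + Finsupp.single b 1
    · rw [if_pos h]
      rcases (mono_cross_iff hab).mp h with ⟨rfl, rfl⟩ | ⟨rfl, rfl⟩
      · rw [if_pos rfl, if_pos rfl, if_neg (fun hh : k = i => hab hh.symm), add_zero]
      · rw [if_pos rfl, if_pos rfl, if_neg (fun hh : k = i => hab hh), zero_add]
    · rw [if_neg h]
      have e1 : (if k = b then if i = a then f i k else 0 else 0) = 0 := by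
        split_ifs with h1 h2
        · exact absurd ((mono_cross_iff hab).mpr (Or.inl ⟨h2, h1⟩)) h
        all_goals rfl
      have e2 : (if k = a then if i = b then f i k else 0 else 0) = 0 := by
        split_ifs with h1 h2
        · exact absurd ((mono_cross_iff hab).mpr (Or.inr ⟨h2, h1⟩)) h
        all_goals rfl
      rw [e1, e2, add_zero]
  simp only [key, Finset.sum_add_distrib]
  simp [Finset.sum_ite_eq']

lemma sum_sq {F : Type} [Field F] (f : Fin n → Fin n → F) (a : Fin n) :
    (∑ i : Fin n, ∑ k : Fin n,
      if Finsupp.single i 1 + Finsupp.single k 1 = Finsupp.single a 2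
      then f i k else 0) = f a a := by
  have key : ∀ i k : Fin n,
      (if Finsupp.single i 1 + Finsupp.single k 1 = Finsupp.single a 2 then f i k else 0)
      = (if k = a then if i = a then f i k else 0 else 0) := by
    intro i k
    by_cases h : Finsupp.single i 1 + Finsupp.single k 1 = Finsupp.single a 2
    · obtain ⟨rfl, rfl⟩ := mono_sq_iff.mp h
      rw [if_pos h, if_pos rfl, if_pos rfl]
    · rw [if_neg h]
      split_ifs with h1 h2
      · exact absurd (mono_sq_iff.mpr ⟨h2, h1⟩) h
      all_goals rfl
  simp only [key]
  simp [Finset.sum_ite_eq']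

end mono

section coeffs
open MvPolynomial

variable {n : ℕ}

lemma X_eq_mono (r : Fin n) : (X r : MvPolynomial (Fin n) F)
    = monomial (Finsupp.single r 1) 1 := by
  rw [← pow_one (X r : MvPolynomial (Fin n) F), X_pow_eq_monomial]

lemma CXX_eq_mono (a : F) (j r : Fin n) : (C a * X j * X r : MvPolynomial (Fin n) F)
    = monomial (Finsupp.single j 1 + Finsupp.single r 1) a := by
  rw [C_mul_X_eq_monomial, X_eq_mono, monomial_mul, mul_one]

lemma coeff_Lv_mul (c d : Fin n → F) (μ : Fin n →₀ ℕ) :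
    coeff μ (Lv c * Lv d) = ∑ i : Fin n, ∑ k : Fin n,
      if Finsupp.single i 1 + Finsupp.single k 1 = μ then c i * d k else 0 := by
  classical
  rw [Lv, Lv, Finset.sum_mul_sum]
  rw [coeff_sum]
  refine Finset.sum_congr rfl fun i _ => ?_
  rw [coeff_sum]
  refine Finset.sum_congr rfl fun k _ => ?_
  rw [show (C (c i) * X i * (C (d k) * X k) : MvPolynomial (Fin n) F)
      = monomial (Finsupp.single i 1 + Finsupp.single k 1) (c i * d k) by
    rw [C_mul_X_eq_monomial, C_mul_X_eq_monomial, monomial_mul]]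
  rw [coeff_monomial]

lemma coeff_Lv_cross (c d : Fin n → F) {a b : Fin n} (hab : a ≠ b) :
    coeff (Finsupp.single a 1 + Finsupp.single b 1) (Lv c * Lv d)
      = c a * d b + c b * d a := by
  rw [coeff_Lv_mul, sum_cross _ hab]

lemma coeff_Lv_sq (c d : Fin n → F) (a : Fin n) :
    coeff (Finsupp.single a 2) (Lv c * Lv d) = c a * d a := by
  rw [coeff_Lv_mul, sum_sq]

lemma coeff_Lv_single (c : Fin n → F) (a : Fin n) :
    coeff (Finsupp.single a 1) (Lv c) = c a := by
  classical
  rw [Lv, coeff_sum]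
  rw [Finset.sum_eq_single a]
  · rw [C_mul_X_eq_monomial, coeff_monomial, if_pos rfl]
  · intro i _ hne
    rw [C_mul_X_eq_monomial, coeff_monomial,
      if_neg (fun h => hne ((Finsupp.single_left_inj one_ne_zero).mp h))]
  · intro h; exact absurd (Finset.mem_univ a) h

lemma coeff_ntg (T : Matrix (Fin n) (Fin n) F) (r : Fin n) (μ : Fin n →₀ ℕ) :
    coeff μ (ntg T r) = (if Finsupp.single r 2 = μ then (1:F) else 0)
      - ∑ j ∈ Finset.univ.filter (fun j => j < r),
          T r j * (if Finsupp.single j 1 + Finsupp.single r 1 = μ then (1:F) else 0) := by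
  classical
  rw [ntg, coeff_sub, X_pow_eq_monomial, coeff_monomial, coeff_sum]
  congr 1
  refine Finset.sum_congr rfl fun j _ => ?_
  rw [CXX_eq_mono, coeff_monomial]
  by_cases h : Finsupp.single j 1 + Finsupp.single r 1 = μ
  · rw [if_pos h, if_pos h, mul_one]
  · rw [if_neg h, if_neg h, mul_zero]

end coeffs

section rel
open MvPolynomial

variable {n : ℕ}

lemma relA {m : ℕ} {p : MvPolynomial (Fin n) F}
    (hp : p ∈ ntIdeal (Bnl n m : Matrix (Fin n) (Fin n) F))
    {a b : Fin n} (hab : a ≠ b) (ha : (a : ℕ) < n - 1) (hb : (b : ℕ) < n - 1) :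
    coeff (Finsupp.single a 1 + Finsupp.single b 1) p = 0 := by
  have h := key_vanish (Bnl n m) (Finsupp.single a 1 + Finsupp.single b 1) 0
      (by rw [deg_add, deg_single, deg_single]) (by simp) 1 0 (fun r => by
    rw [coeff_ntg]
    have h1 : ¬ (Finsupp.single r 2 = Finsupp.single a 1 + Finsupp.single b 1) := by
      intro hh
      obtain ⟨h1', h2'⟩ := mono_sq_iff.mp hh.symm
      exact hab (h1'.trans h2'.symm)
    rw [if_neg h1]
    have h2 : (∑ j ∈ Finset.univ.filter (fun j => j < r),
        (Bnl n m : Matrix (Fin n) (Fin n) F) r j *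
          (if Finsupp.single j 1 + Finsupp.single r 1
            = Finsupp.single a 1 + Finsupp.single b 1 then (1:F) else 0)) = 0 := by
      apply Finset.sum_eq_zero
      intro j hj
      by_cases hc : Finsupp.single j 1 + Finsupp.single r 1
          = Finsupp.single a 1 + Finsupp.single b 1
      · rcases (mono_cross_iff hab).mp hc with ⟨rfl, rfl⟩ | ⟨rfl, rfl⟩
        · rw [show (Bnl n m : Matrix (Fin n) (Fin n) F) r j = 0 from by
            simp only [Bnl, ite_eq_right_iff, one_ne_zero, imp_false, not_and]; omega, zero_mul]
        · rw [show (Bnl n m : Matrix (Fin n) (Fin n) F) r j = 0 from by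
            simp only [Bnl, ite_eq_right_iff, one_ne_zero, imp_false, not_and]; omega, zero_mul]
      · rw [if_neg hc, mul_zero]
    rw [h2]
    ring) hp
  simpa using h

lemma relD {m : ℕ} {p : MvPolynomial (Fin n) F}
    (hp : p ∈ ntIdeal (Bnl n m : Matrix (Fin n) (Fin n) F))
    (last : Fin n) (hlast : (last : ℕ) = n - 1)
    {i : Fin n} (him : (i : ℕ) < m) (hin : (i : ℕ) < n - 1) :
    coeff (Finsupp.single last 2) p
      + coeff (Finsupp.single i 1 + Finsupp.single last 1) p = 0 := by
  have hne : i ≠ last := fun h => by rw [h, hlast] at hin; omega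
  have h := key_vanish (Bnl n m) (Finsupp.single last 2)
      (Finsupp.single i 1 + Finsupp.single last 1)
      (by rw [deg_single]) (by rw [deg_add, deg_single, deg_single]) 1 1 (fun r => by
    rw [coeff_ntg, coeff_ntg]
    by_cases hr : r = last
    · subst hr
      rw [if_pos rfl]
      have hs1 : (∑ j ∈ Finset.univ.filter (fun j => j < r),
          (Bnl n m : Matrix (Fin n) (Fin n) F) r j *
            (if Finsupp.single j 1 + Finsupp.single r 1
              = Finsupp.single r 2 then (1:F) else 0)) = 0 := by
        apply Finset.sum_eq_zero
        intro j hj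
        by_cases hc : Finsupp.single j 1 + Finsupp.single r 1 = Finsupp.single r 2
        · obtain ⟨rfl, -⟩ := mono_sq_iff.mp hc
          exact absurd (Finset.mem_filter.mp hj).2 (lt_irrefl _)
        · rw [if_neg hc, mul_zero]
      have hn2 : ¬ (Finsupp.single r 2 = Finsupp.single i 1 + Finsupp.single r 1) := by
        intro hh
        exact hne (mono_sq_iff.mp hh.symm).1
      rw [hs1, if_neg hn2]
      have hs2 : (∑ j ∈ Finset.univ.filter (fun j => j < r),
          (Bnl n m : Matrix (Fin n) (Fin n) F) r j *
            (if Finsupp.single j 1 + Finsupp.single r 1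
              = Finsupp.single i 1 + Finsupp.single r 1 then (1:F) else 0)) = 1 := by
        rw [Finset.sum_eq_single i]
        · rw [if_pos rfl, mul_one]
          show (Bnl n m : Matrix (Fin n) (Fin n) F) r i = 1
          simp only [Bnl]
          rw [if_pos ⟨hlast, him⟩]
        · intro j hj hji
          by_cases hc : Finsupp.single j 1 + Finsupp.single r 1
              = Finsupp.single i 1 + Finsupp.single r 1
          · rcases (mono_cross_iff hne).mp hc with ⟨hj1, -⟩ | ⟨hj1, hr1⟩
            · exact absurd hj1 hji
            · rw [hj1] at hj
              exact absurd (Finset.mem_filter.mp hj).2 (lt_irrefl r)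
          · rw [if_neg hc, mul_zero]
        · intro hnotmem
          exact absurd (Finset.mem_filter.mpr ⟨Finset.mem_univ i,
            by rw [Fin.lt_def, hlast]; omega⟩) hnotmem
      rw [hs2]
      ring
    · have hn1 : ¬ (Finsupp.single r 2 = Finsupp.single last 2) := by
        intro hh
        exact hr ((Finsupp.single_left_inj (by norm_num : (2:ℕ) ≠ 0)).mp hh)
      rw [if_neg hn1]
      have hs1 : (∑ j ∈ Finset.univ.filter (fun j => j < r),
          (Bnl n m : Matrix (Fin n) (Fin n) F) r j *
            (if Finsupp.single j 1 + Finsupp.single r 1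
              = Finsupp.single last 2 then (1:F) else 0)) = 0 := by
        apply Finset.sum_eq_zero
        intro j hj
        by_cases hc : Finsupp.single j 1 + Finsupp.single r 1 = Finsupp.single last 2
        · exact absurd (mono_sq_iff.mp hc).2 hr
        · rw [if_neg hc, mul_zero]
      have hn2 : ¬ (Finsupp.single r 2 = Finsupp.single i 1 + Finsupp.single last 1) := by
        intro hh
        obtain ⟨-, h2'⟩ := mono_sq_iff.mp hh.symm
        exact hr h2'.symm
      rw [hs1, if_neg hn2]
      have hs2 : (∑ j ∈ Finset.univ.filter (fun j => j < r),
          (Bnl n m : Matrix (Fin n) (Fin n) F) r j *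
            (if Finsupp.single j 1 + Finsupp.single r 1
              = Finsupp.single i 1 + Finsupp.single last 1 then (1:F) else 0)) = 0 := by
        apply Finset.sum_eq_zero
        intro j hj
        by_cases hc : Finsupp.single j 1 + Finsupp.single r 1
            = Finsupp.single i 1 + Finsupp.single last 1
        · rcases (mono_cross_iff hne).mp hc with ⟨-, hr1⟩ | ⟨hj1, hr1⟩
          · exact absurd hr1 hr
          · rw [hj1] at hj
            have hlr := (Finset.mem_filter.mp hj).2
            rw [Fin.lt_def, hlast] at hlr
            have := r.isLt
            omega
        · rw [if_neg hc, mul_zero]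
      rw [hs2]
      ring) hp
  simpa using h

end rel
section psi
open MvPolynomial

variable {n : ℕ}

def psiMap (Γ : Matrix (Fin n) (Fin n) F) :
    MvPolynomial (Fin n) F →ₐ[F] MvPolynomial (Fin n) F :=
  aeval (fun j => Lv (fun i => Γ i j))

lemma psi_X (Γ : Matrix (Fin n) (Fin n) F) (j : Fin n) :
    psiMap Γ (X j) = Lv (fun i => Γ i j) := aeval_X _ _

lemma mk_psi (T S : Matrix (Fin n) (Fin n) F) (Γ : Matrix (Fin n) (Fin n) F)
    (e : NTAlg T ≃ₐ[F] NTAlg S)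
    (he : ∀ j : Fin n, e (ntGen T j) = ∑ i : Fin n, Γ i j • ntGen S i)
    (p : MvPolynomial (Fin n) F) :
    Ideal.Quotient.mk (ntIdeal S) (psiMap Γ p)
      = e (Ideal.Quotient.mk (ntIdeal T) p) := by
  have key : (Ideal.Quotient.mkₐ F (ntIdeal S)).comp (psiMap Γ)
      = (e.toAlgHom).comp (Ideal.Quotient.mkₐ F (ntIdeal T)) := by
    apply MvPolynomial.algHom_ext
    intro j
    rw [AlgHom.comp_apply, AlgHom.comp_apply, psi_X, Ideal.Quotient.mkₐ_eq_mk,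
      Ideal.Quotient.mkₐ_eq_mk, AlgEquiv.toAlgHom_eq_coe, AlgEquiv.coe_toAlgHom]
    rw [show e (Ideal.Quotient.mk (ntIdeal T) (X j)) = ∑ i : Fin n, Γ i j • ntGen S i from he j]
    rw [Lv, map_sum]
    refine Finset.sum_congr rfl fun i _ => ?_
    rw [← MvPolynomial.smul_eq_C_mul, ntGen]
    have hh := map_smul (Ideal.Quotient.mkₐ F (ntIdeal S)) (Γ i j) (X i)
    rw [Ideal.Quotient.mkₐ_eq_mk] at hh
    exact hh
  have := AlgHom.congr_fun key p
  simpa using this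

lemma ntg_mem (T : Matrix (Fin n) (Fin n) F) (i : Fin n) : ntg T i ∈ ntIdeal T := by
  rw [ntIdeal_eq]
  exact Ideal.subset_span ⟨i, rfl⟩

lemma psi_ntg_mem (T S : Matrix (Fin n) (Fin n) F) (Γ : Matrix (Fin n) (Fin n) F)
    (e : NTAlg T ≃ₐ[F] NTAlg S)
    (he : ∀ j : Fin n, e (ntGen T j) = ∑ i : Fin n, Γ i j • ntGen S i) (i : Fin n) :
    psiMap Γ (ntg T i) ∈ ntIdeal S := by
  have h0 : Ideal.Quotient.mk (ntIdeal T) (ntg T i) = 0 :=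
    Ideal.Quotient.eq_zero_iff_mem.mpr (ntg_mem T i)
  rw [← Ideal.Quotient.eq_zero_iff_mem, mk_psi T S Γ e he, h0, map_zero]

lemma psi_Lv (Γ : Matrix (Fin n) (Fin n) F) (v : Fin n → F) :
    psiMap Γ (Lv v) = Lv (fun i => ∑ j, Γ i j * v j) := by
  rw [Lv, map_sum]
  calc (∑ j, psiMap Γ (C (v j) * X j))
      = ∑ j, ∑ i, C (Γ i j * v j) * X i := by
        refine Finset.sum_congr rfl fun j _ => ?_
        rw [map_mul, psi_X, show psiMap Γ (C (v j)) = C (v j) from aeval_C _ _, Lv,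
          Finset.mul_sum]
        refine Finset.sum_congr rfl fun i _ => ?_
        rw [← mul_assoc, ← map_mul, mul_comm (v j)]
    _ = ∑ i, ∑ j, C (Γ i j * v j) * X i := Finset.sum_comm
    _ = Lv (fun i => ∑ j, Γ i j * v j) := by
        rw [Lv]
        refine Finset.sum_congr rfl fun i _ => ?_
        rw [← Finset.sum_mul, ← map_sum]

lemma ntg_Bnl_ne {l : ℕ} (j : Fin n) (hj : (j : ℕ) ≠ n - 1) :
    ntg (Bnl n l : Matrix (Fin n) (Fin n) F) j = X j ^ 2 := by
  rw [ntg, sub_eq_self]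
  apply Finset.sum_eq_zero
  intro k _
  rw [show (Bnl n l : Matrix (Fin n) (Fin n) F) j k = 0 from by
    simp only [Bnl, ite_eq_right_iff, one_ne_zero, imp_false, not_and]; omega]
  simp

lemma ntg_Bnl_last {l : ℕ} (hl : l ≤ n - 1) (last : Fin n) (hlast : (last : ℕ) = n - 1) :
    ntg (Bnl n l : Matrix (Fin n) (Fin n) F) last
      = X last ^ 2 - ∑ j ∈ Finset.univ.filter (fun j : Fin n => (j : ℕ) < l),
          X j * X last := by
  rw [ntg]
  congr 1
  calc (∑ j ∈ Finset.univ.filter (fun j => j < last),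
          C ((Bnl n l : Matrix (Fin n) (Fin n) F) last j) * X j * X last)
      = ∑ j ∈ Finset.univ.filter (fun j => j < last),
          (if (j : ℕ) < l then X j * X last else 0) := by
        refine Finset.sum_congr rfl fun j _ => ?_
        by_cases h : (j : ℕ) < l
        · rw [if_pos h, show (Bnl n l : Matrix (Fin n) (Fin n) F) last j = 1 from by
            simp only [Bnl]; rw [if_pos ⟨hlast, h⟩], map_one, one_mul]
        · rw [if_neg h, show (Bnl n l : Matrix (Fin n) (Fin n) F) last j = 0 from by
            simp only [Bnl, ite_eq_right_iff, one_ne_zero, imp_false, not_and]; omega]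
          simp
    _ = ∑ j ∈ (Finset.univ.filter (fun j => j < last)).filter (fun j : Fin n => (j : ℕ) < l),
          X j * X last := (Finset.sum_filter _ _).symm
    _ = ∑ j ∈ Finset.univ.filter (fun j : Fin n => (j : ℕ) < l), X j * X last := by
        congr 1
        rw [Finset.filter_filter]
        apply Finset.filter_congr
        intro j _
        simp only [Fin.lt_def, hlast]
        constructor
        · rintro ⟨-, h2⟩; exact h2
        · intro h2; exact ⟨by omega, h2⟩

lemma card_filter_lt (k : ℕ) (hk : k ≤ n) :
    (Finset.univ.filter fun i : Fin n => (i : ℕ) < k).card = k := by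
  apply Finset.card_eq_of_bijective (fun i hi => (⟨i, by omega⟩ : Fin n))
  · intro a ha
    have := (Finset.mem_filter.mp ha).2
    exact ⟨(a : ℕ), this, by ext; rfl⟩
  · intro i hi
    refine Finset.mem_filter.mpr ⟨Finset.mem_univ _, ?_⟩
    simpa using hi
  · intro i j hi hj hij
    simpa using congrArg Fin.val hij

end psi
set_option maxHeartbeats 2000000 in
open MvPolynomial in
theorem stmt15 {n l m : ℕ} (h2 : (2 : F) ≠ 0) (hn : 2 ≤ n)
    (hl : 1 < l) (hlm : l < m) (hm : m < n) :
    ¬ NTIso (Bnl n l : Matrix (Fin n) (Fin n) F) (Bnl n m : Matrix (Fin n) (Fin n) F) := by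
  rintro ⟨e, Γ, he⟩
  classical
  have hn4 : 4 ≤ n := by omega
  set last : Fin n := ⟨n - 1, by omega⟩ with hlastdef
  have hlast : (last : ℕ) = n - 1 := rfl
  -- Γ is injective
  have hinj : ∀ v : Fin n → F, (∀ a : Fin n, ∑ j, Γ a j * v j = 0) → v = 0 := by
    intro v hv
    have h1 : psiMap Γ (Lv v) = 0 := by
      rw [psi_Lv, show (fun i => ∑ j, Γ i j * v j) = fun _ : Fin n => (0 : F) from funext hv,
        Lv]
      simp
    have h2' : e (Ideal.Quotient.mk (ntIdeal (Bnl n l : Matrix (Fin n) (Fin n) F)) (Lv v)) = 0 := by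
      rw [← mk_psi (Bnl n l : Matrix (Fin n) (Fin n) F) (Bnl n m : Matrix (Fin n) (Fin n) F) Γ e he, h1, map_zero]
    have h3 : Lv v ∈ ntIdeal (Bnl n l : Matrix (Fin n) (Fin n) F) := by
      rw [← Ideal.Quotient.eq_zero_iff_mem]
      exact e.injective (by rw [h2', map_zero])
    funext a
    have h4 := key_vanish1 (Bnl n l : Matrix (Fin n) (Fin n) F) a h3
    rwa [coeff_Lv_single] at h4
  have hdet : Γ.det ≠ 0 := by
    intro h0
    obtain ⟨v, hv0, hv⟩ := Matrix.exists_mulVec_eq_zero_iff.mpr h0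
    apply hv0
    apply hinj
    intro a
    have hva := congr_fun hv a
    simpa [Matrix.mulVec, dotProduct] using hva
  -- column membership for j ≠ last
  have hmem1 : ∀ j : Fin n, (j : ℕ) ≠ n - 1 →
      (Lv (fun i => Γ i j) * Lv (fun i => Γ i j)) ∈ ntIdeal (Bnl n m : Matrix (Fin n) (Fin n) F) := by
    intro j hj
    have h := psi_ntg_mem (Bnl n l : Matrix (Fin n) (Fin n) F) (Bnl n m : Matrix (Fin n) (Fin n) F) Γ e he j
    rwa [show psiMap Γ (ntg (Bnl n l : Matrix (Fin n) (Fin n) F) j) = Lv (fun i => Γ i j) * Lv (fun i => Γ i j) from by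
      rw [ntg_Bnl_ne j hj, map_pow, psi_X, sq]] at h
  -- last entries of columns j ≠ last vanish
  have hΓl : ∀ j : Fin n, (j : ℕ) ≠ n - 1 → Γ last j = 0 := by
    intro j hj
    have hmem := hmem1 j hj
    have h1ne : (⟨0, by omega⟩ : Fin n) ≠ last := by
      intro hh
      have := congrArg Fin.val hh
      simp only [hlast] at this
      omega
    have h2ne : (⟨1, by omega⟩ : Fin n) ≠ last := by
      intro hh
      have := congrArg Fin.val hh
      simp only [hlast] at this
      omega
    have h12 : (⟨0, by omega⟩ : Fin n) ≠ (⟨1, by omega⟩ : Fin n) := by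
      intro hh
      have := congrArg Fin.val hh
      simp at this
    have e1 := relD hmem last hlast (i := ⟨0, by omega⟩) (by show 0 < m; omega)
      (by show 0 < n - 1; omega)
    rw [coeff_Lv_sq, coeff_Lv_cross _ _ h1ne] at e1
    have e2 := relD hmem last hlast (i := ⟨1, by omega⟩) (by show 1 < m; omega)
      (by show 1 < n - 1; omega)
    rw [coeff_Lv_sq, coeff_Lv_cross _ _ h2ne] at e2
    have e3 := relA hmem h12 (by show 0 < n - 1; omega) (by show 1 < n - 1; omega)
    rw [coeff_Lv_cross _ _ h12] at e3
    have e1' : Γ last j * Γ last j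
        + (Γ (⟨0, by omega⟩ : Fin n) j * Γ last j + Γ last j * Γ (⟨0, by omega⟩ : Fin n) j)
        = 0 := e1
    have e2' : Γ last j * Γ last j
        + (Γ (⟨1, by omega⟩ : Fin n) j * Γ last j + Γ last j * Γ (⟨1, by omega⟩ : Fin n) j)
        = 0 := e2
    have e3' : Γ (⟨0, by omega⟩ : Fin n) j * Γ (⟨1, by omega⟩ : Fin n) j
        + Γ (⟨1, by omega⟩ : Fin n) j * Γ (⟨0, by omega⟩ : Fin n) j = 0 := e3
    have hx4 : (Γ last j) ^ 4 = 0 := by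
      linear_combination (Γ last j * Γ last j) * e1'
        - (Γ (⟨0, by omega⟩ : Fin n) j * Γ last j + Γ last j * Γ (⟨0, by omega⟩ : Fin n) j) * e2'
        + (2 * (Γ last j * Γ last j)) * e3'
    exact pow_eq_zero_iff (by norm_num : (4:ℕ) ≠ 0) |>.mp hx4
  -- pairwise products in columns j ≠ last vanish
  have hpair : ∀ j : Fin n, (j : ℕ) ≠ n - 1 → ∀ a b : Fin n, a ≠ b → Γ a j * Γ b j = 0 := by
    intro j hj a b hab
    by_cases han : (a : ℕ) = n - 1
    · rw [show a = last from Fin.ext (by rw [hlast]; exact han), hΓl j hj, zero_mul]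
    · by_cases hbn : (b : ℕ) = n - 1
      · rw [show b = last from Fin.ext (by rw [hlast]; exact hbn), hΓl j hj, mul_zero]
      · have ha' : (a : ℕ) < n - 1 := by have := a.isLt; omega
        have hb' : (b : ℕ) < n - 1 := by have := b.isLt; omega
        have h := relA (hmem1 j hj) hab ha' hb'
        rw [coeff_Lv_cross _ _ hab] at h
        have h' : Γ a j * Γ b j + Γ b j * Γ a j = 0 := h
        have h22 : (2 : F) * (Γ a j * Γ b j) = 0 := by linear_combination h'
        rcases mul_eq_zero.mp h22 with h'' | h''
        · exact absurd h'' h2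
        · exact h''
  -- the (last,last) entry is nonzero
  have hblast : Γ last last ≠ 0 := by
    intro h0
    apply hdet
    apply Matrix.det_eq_zero_of_row_eq_zero last
    intro j
    by_cases hj : (j : ℕ) = n - 1
    · rwa [show j = last from Fin.ext (by rw [hlast]; exact hj)]
    · exact hΓl j hj
  -- the polynomial P2 and its coefficients
  set Kl : Finset (Fin n) := Finset.univ.filter (fun j : Fin n => (j : ℕ) < l) with hKl
  set bb : Fin n → F := fun i => Γ i last with hbb
  set P2 : MvPolynomial (Fin n) F :=
    Lv bb * Lv bb - ∑ j ∈ Kl, Lv (fun i => Γ i j) * Lv bb with hP2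
  have hmem2 : P2 ∈ ntIdeal (Bnl n m : Matrix (Fin n) (Fin n) F) := by
    have h := psi_ntg_mem (Bnl n l : Matrix (Fin n) (Fin n) F) (Bnl n m : Matrix (Fin n) (Fin n) F) Γ e he last
    rwa [show psiMap Γ (ntg (Bnl n l : Matrix (Fin n) (Fin n) F) last) = P2 from by
      rw [ntg_Bnl_last (by omega) last hlast, map_sub, map_pow, map_sum, psi_X, sq, hP2,
        ← hKl, ← hbb]
      congr 1
      refine Finset.sum_congr rfl fun j _ => ?_
      rw [map_mul, psi_X, psi_X]] at h
  have hc2 : ∀ a k : Fin n, a ≠ k →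
      coeff (Finsupp.single a 1 + Finsupp.single k 1) P2
        = (bb a * bb k + bb k * bb a)
          - ((∑ j ∈ Kl, Γ a j) * bb k + (∑ j ∈ Kl, Γ k j) * bb a) := by
    intro a k hak
    rw [hP2, coeff_sub, coeff_Lv_cross _ _ hak, coeff_sum]
    congr 1
    calc (∑ j ∈ Kl, coeff (Finsupp.single a 1 + Finsupp.single k 1)
            (Lv (fun i => Γ i j) * Lv bb))
        = ∑ j ∈ Kl, (Γ a j * bb k + Γ k j * bb a) :=
          Finset.sum_congr rfl fun j _ => coeff_Lv_cross _ _ hak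
      _ = (∑ j ∈ Kl, Γ a j * bb k) + (∑ j ∈ Kl, Γ k j * bb a) := Finset.sum_add_distrib
      _ = (∑ j ∈ Kl, Γ a j) * bb k + (∑ j ∈ Kl, Γ k j) * bb a := by
          rw [Finset.sum_mul, Finset.sum_mul]
  have hcsq : coeff (Finsupp.single last 2) P2
      = bb last * bb last - (∑ j ∈ Kl, Γ last j) * bb last := by
    rw [hP2, coeff_sub, coeff_Lv_sq, coeff_sum]
    congr 1
    calc (∑ j ∈ Kl, coeff (Finsupp.single last 2) (Lv (fun i => Γ i j) * Lv bb))
        = ∑ j ∈ Kl, Γ last j * bb last :=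
          Finset.sum_congr rfl fun j _ => coeff_Lv_sq _ _ _
      _ = (∑ j ∈ Kl, Γ last j) * bb last := by rw [Finset.sum_mul]
  have hKlne : ∀ j ∈ Kl, (j : ℕ) ≠ n - 1 := by
    intro j hj
    rw [hKl] at hj
    have := (Finset.mem_filter.mp hj).2
    omega
  have hwl : (∑ j ∈ Kl, Γ last j) = 0 :=
    Finset.sum_eq_zero fun j hj => hΓl j (hKlne j hj)
  have R4 : ∀ i : Fin n, (i : ℕ) < m → (i : ℕ) < n - 1 →
      bb last * bb last + 2 * (bb i * bb last) - (∑ j ∈ Kl, Γ i j) * bb last = 0 := by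
    intro i him hin
    have hne : i ≠ last := by
      intro hh
      rw [hh, hlast] at hin
      omega
    have h := relD hmem2 last hlast him hin
    rw [hcsq, hc2 i last hne, hwl] at h
    linear_combination h
  have R1 : ∀ a k : Fin n, a ≠ k → (a : ℕ) < n - 1 → (k : ℕ) < n - 1 →
      (bb a * bb k + bb k * bb a)
        - ((∑ j ∈ Kl, Γ a j) * bb k + (∑ j ∈ Kl, Γ k j) * bb a) = 0 := by
    intro a k hak ha hk
    have h := relA hmem2 hak ha hk
    rw [hc2 a k hak] at h
    exact h
  -- counting: some i with val < m has zero Kl-row-sum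
  have hex : ∃ i : Fin n, (i : ℕ) < m ∧ (∑ j ∈ Kl, Γ i j) = 0 := by
    by_contra hcon
    push_neg at hcon
    set r : Fin n → Fin n := fun j => if h : ∃ i, Γ i j ≠ 0 then h.choose else j with hr
    have hsub : (Finset.univ.filter fun i : Fin n => (i : ℕ) < m) ⊆ Kl.image r := by
      intro i hi
      have him := (Finset.mem_filter.mp hi).2
      have hwi := hcon i him
      obtain ⟨j, hjK, hΓij⟩ := Finset.exists_ne_zero_of_sum_ne_zero hwi
      have hex2 : ∃ i', Γ i' j ≠ 0 := ⟨i, hΓij⟩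
      have hrj : Γ (r j) j ≠ 0 := by
        rw [hr]
        simp only [dif_pos hex2]
        exact hex2.choose_spec
      have hieq : i = r j := by
        by_contra hne
        exact hrj (by
          rcases mul_eq_zero.mp (hpair j (hKlne j hjK) i (r j) hne) with h' | h'
          · exact absurd h' hΓij
          · exact h')
      exact Finset.mem_image.mpr ⟨j, hjK, hieq.symm⟩
    have hcard := Finset.card_le_card hsub
    rw [card_filter_lt m (by omega)] at hcard
    have himg := Finset.card_image_le (s := Kl) (f := r)
    have hKcard : Kl.card = l := by rw [hKl]; exact card_filter_lt l (by omega)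
    omega
  obtain ⟨i, him, hwi⟩ := hex
  have hin : (i : ℕ) < n - 1 := by omega
  have h4i := R4 i him hin
  rw [hwi] at h4i
  have hfac : bb last * (bb last + 2 * bb i) = 0 := by linear_combination h4i
  have hsum0 : bb last + 2 * bb i = 0 := by
    rcases mul_eq_zero.mp hfac with h' | h'
    · exact absurd h' hblast
    · exact h'
  have hbi : bb i ≠ 0 := by
    intro h0
    apply hblast
    show bb last = 0
    rw [h0] at hsum0
    linear_combination hsum0
  -- pick k ≠ i with val < m
  have hex3 : ∃ k : Fin n, k ≠ i ∧ (k : ℕ) < m ∧ (k : ℕ) < n - 1 := by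
    refine ⟨⟨if (i : ℕ) = 0 then 1 else 0, by split_ifs <;> omega⟩, ?_, ?_, ?_⟩
    · intro hh
      have := congrArg Fin.val hh
      simp only at this
      split_ifs at this <;> omega
    · show (if (i : ℕ) = 0 then 1 else 0) < m
      split_ifs <;> omega
    · show (if (i : ℕ) = 0 then 1 else 0) < n - 1
      split_ifs <;> omega
  obtain ⟨k, hki, hkm, hkn⟩ := hex3
  have h1ik := R1 i k (fun hh => hki hh.symm) hin hkn
  rw [hwi] at h1ik
  have hfac2 : bb i * (2 * bb k - (∑ j ∈ Kl, Γ k j)) = 0 := by linear_combination h1ik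
  have hwk : 2 * bb k - (∑ j ∈ Kl, Γ k j) = 0 := by
    rcases mul_eq_zero.mp hfac2 with h' | h'
    · exact absurd h' hbi
    · exact h'
  have h4k := R4 k hkm hkn
  have hbl2 : bb last * bb last = 0 := by linear_combination h4k - bb last * hwk
  exact hblast (mul_self_eq_zero.mp hbl2)
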